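/- Let X be a Banach space, (x_α)_{α<κ} a transfinite basic sequence with constant C (i.e., ‖y‖ ≤ C‖y + z‖ for all y ∈ span{x_α : α < η}, z ∈ closed span{x_α : η ≤ α < κ}, and all η < κ), where κ is a regular uncountable cardinal, and let P_η denote the associated basis projections with ‖P_η‖ ≤ C. If C' = liminf_{η→κ} ‖P_η‖ is finite, then there is a cofinal subsequence (η_θ)_{θ<κ} with ‖P_{η_θ}‖ ≤ C' + 1 for all θ, and the corresponding subsequence (x_{α})_{α in the blocks determined by (η_θ)} forms a basic sequence with constant ≤ C' + 1. -/

import Mathlib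

open Cardinal

/-- Stabilizing the basis projection constants of a transfinite basic sequence of
regular uncountable length along a cofinal subsequence. -/
theorem basis_projection_liminf_stabilization
    {X : Type*} [NormedAddCommGroup X] [NormedSpace ℝ X] [CompleteSpace X]
    (κ : Cardinal) (hreg : κ.IsRegular) (hunc : ℵ₀ < κ)
    (x : Ordinal → X) (hx : ∀ α < κ.ord, x α ≠ 0)
    (C : ℝ) (hC : 1 ≤ C)
    (hbasic : ∀ η < κ.ord,
      ∀ y ∈ Submodule.span ℝ {v | ∃ α < η, v = x α},
      ∀ z ∈ (Submodule.span ℝ {v | ∃ α, η ≤ α ∧ α < κ.ord ∧ v = x α}).topologicalClosure,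
        ‖y‖ ≤ C * ‖y + z‖)
    (P : Ordinal → (X →L[ℝ] X))
    (hPnorm : ∀ η < κ.ord, ‖P η‖ ≤ C)
    (hPfix : ∀ η < κ.ord, ∀ y ∈ Submodule.span ℝ {v | ∃ α < η, v = x α}, P η y = y)
    (hPker : ∀ η < κ.ord, ∀ α, η ≤ α → α < κ.ord → P η (x α) = 0)
    (C' : ℝ)
    (hliminf : ∀ ε > 0,
      (∀ η < κ.ord, ∃ η', η ≤ η' ∧ η' < κ.ord ∧ ‖P η'‖ < C' + ε) ∧
      (∃ η < κ.ord, ∀ η', η ≤ η' → η' < κ.ord → C' - ε < ‖P η'‖)) :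
    ∃ f : Ordinal → Ordinal, StrictMono f ∧
      (∀ θ < κ.ord, f θ < κ.ord) ∧
      (∀ η < κ.ord, ∃ θ < κ.ord, η ≤ f θ) ∧
      (∀ θ < κ.ord, ‖P (f θ)‖ ≤ C' + 1) ∧
      (∀ θ < κ.ord,
        ∀ y ∈ Submodule.span ℝ {v | ∃ α < f θ, v = x α},
        ∀ z ∈ (Submodule.span ℝ
            {v | ∃ α, f θ ≤ α ∧ α < κ.ord ∧ v = x α}).topologicalClosure,
          ‖y‖ ≤ (C' + 1) * ‖y + z‖) := by
  obtain ⟨hcof, -⟩ := hliminf 1 one_pos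
  set S : Set Ordinal := {η | η < κ.ord ∧ ‖P η‖ < C' + 1} ∪ Set.Ici κ.ord with hS
  have hSunb : ¬ BddAbove S := by
    rintro ⟨b, hb⟩
    have h1 : κ.ord ⊔ (b + 1) ∈ S := Or.inr (Set.mem_Ici.mpr le_sup_left)
    have h2 : κ.ord ⊔ (b + 1) ≤ b := hb h1
    exact absurd (le_trans le_sup_right h2) (by simp [Order.lt_succ])
  set f : Ordinal → Ordinal := Ordinal.enumOrd S with hf
  have hmono : StrictMono f := Ordinal.enumOrd_strictMono hSunb
  -- key: f θ < κ.ord for θ < κ.ord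
  have hlt : ∀ θ < κ.ord, f θ < κ.ord := by
    intro θ hθ
    induction θ using Ordinal.induction with
    | h θ IH =>
      -- bound previous values
      have hbsup : Ordinal.bsup θ (fun ι hι => f ι + 1) < κ.ord := by
        apply Ordinal.bsup_lt_ord
        · rw [hreg.cof_eq]
          exact (Cardinal.lt_ord.mp hθ)
        · intro ι hι
          have h := (Cardinal.isSuccLimit_ord hreg.aleph0_le).succ_lt (IH ι hι (hι.trans hθ))
          rwa [Ordinal.add_one_eq_succ]
      set b := Ordinal.bsup θ (fun ι hι => f ι + 1) with hb
      obtain ⟨η', hη'1, hη'2, hη'3⟩ := hcof b hbsup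
      have hη'S : η' ∈ S := Or.inl ⟨hη'2, hη'3⟩
      have : f θ ≤ η' := by
        apply Ordinal.enumOrd_le_of_forall_lt hη'S
        intro ι hι
        have h1 : f ι + 1 ≤ b := Ordinal.le_bsup (fun ι hι => f ι + 1) ι hι
        exact lt_of_lt_of_le (lt_of_lt_of_le (Order.lt_succ _) h1) hη'1
      exact lt_of_le_of_lt this hη'2
  have hmem : ∀ θ < κ.ord, f θ ∈ S := fun θ _ => Ordinal.enumOrd_mem hSunb θ
  have hnormbd : ∀ θ < κ.ord, ‖P (f θ)‖ ≤ C' + 1 := by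
    intro θ hθ
    rcases hmem θ hθ with h | h
    · exact le_of_lt h.2
    · exact absurd (hlt θ hθ) (not_lt.mpr h)
  refine ⟨f, hmono, hlt, ?_, hnormbd, ?_⟩
  · intro η hη
    exact ⟨η, hη, (Ordinal.enumOrd_strictMono hSunb).le_apply⟩
  · intro θ hθ y hy z hz
    have hfθ := hlt θ hθ
    -- P (f θ) fixes y
    have hPy : P (f θ) y = y := hPfix (f θ) hfθ y hy
    -- P (f θ) kills z
    have hPz : P (f θ) z = 0 := by
      have hker : (Submodule.span ℝ
          {v | ∃ α, f θ ≤ α ∧ α < κ.ord ∧ v = x α}).topologicalClosure ≤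
          LinearMap.ker (P (f θ) : X →ₗ[ℝ] X) := by
        apply Submodule.topologicalClosure_minimal
        · rw [Submodule.span_le]
          rintro v ⟨α, hα1, hα2, rfl⟩
          exact hPker (f θ) hfθ α hα1 hα2
        · exact ContinuousLinearMap.isClosed_ker (P (f θ))
      exact hker hz
    have : P (f θ) (y + z) = y := by rw [map_add, hPy, hPz, add_zero]
    calc ‖y‖ = ‖P (f θ) (y + z)‖ := by rw [this]
      _ ≤ ‖P (f θ)‖ * ‖y + z‖ := (P (f θ)).le_opNorm _
      _ ≤ (C' + 1) * ‖y + z‖ :=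
          mul_le_mul_of_nonneg_right (hnormbd θ hθ) (norm_nonneg _)
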